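/- Let d ≥ 1 be an integer, L ≥ 0 and δ > 0 with δL < 2, and let a : ℝ^d → ℝ^d be Lipschitz with constant L. Then there exists a bijection y : ℝ^d → ℝ^d such that for every x ∈ ℝ^d, x − y(x) + a((δ/2)(x + y(x))) = 0; in particular the solution map of the implicit equation is injective and surjective on ℝ^d. -/
import Mathlib

set_option maxHeartbeats 1000000 in
/-- Appendix E.2 of the paper: the solution map of the implicit equation
`x − y + a((δ/2)(x + y)) = 0` is a bijection of `ℝ^d`. -/
theorem stmt_5 (d : ℕ) (hd : 1 ≤ d) (L δ : ℝ) (hL : 0 ≤ L) (hδ : 0 < δ) (hδL : δ * L < 2)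
    (a : EuclideanSpace ℝ (Fin d) → EuclideanSpace ℝ (Fin d))
    (ha : ∀ x y, ‖a x - a y‖ ≤ L * ‖x - y‖) :
    ∃ y : EuclideanSpace ℝ (Fin d) → EuclideanSpace ℝ (Fin d),
      Function.Bijective y ∧ ∀ x, x - y x + a ((δ / 2) • (x + y x)) = 0 := by
  set K : NNReal := Real.toNNReal (δ * L / 2) with hK
  have hK1 : (K : ℝ) = δ * L / 2 := Real.coe_toNNReal _ (by positivity)
  have hKlt : K < 1 := by
    rw [← NNReal.coe_lt_coe, hK1]; norm_num; linarith
  have hδ2 : (0:ℝ) < δ / 2 := by linarith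
  have contr : ∀ x : EuclideanSpace ℝ (Fin d),
      ContractingWith K (fun w : EuclideanSpace ℝ (Fin d) => x + a ((δ/2) • (x + w))) := by
    intro x
    refine ⟨hKlt, LipschitzWith.of_dist_le_mul fun u v => ?_⟩
    rw [hK1]
    have e : (δ/2) • (x + u) - (δ/2) • (x + v) = (δ/2) • (u - v) := by
      rw [← smul_sub]; congr 1; abel
    calc dist (x + a ((δ/2) • (x+u))) (x + a ((δ/2) • (x+v)))
        = ‖a ((δ/2) • (x+u)) - a ((δ/2) • (x+v))‖ := by
          rw [dist_add_left, dist_eq_norm]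
      _ ≤ L * ‖(δ/2) • (x+u) - (δ/2) • (x+v)‖ := ha _ _
      _ = L * (δ/2) * ‖u - v‖ := by
          rw [e, norm_smul, Real.norm_eq_abs, abs_of_pos hδ2]; ring
      _ = δ * L / 2 * dist u v := by rw [dist_eq_norm]; ring
  let y : EuclideanSpace ℝ (Fin d) → EuclideanSpace ℝ (Fin d) :=
    fun x => (contr x).fixedPoint _
  have hfix : ∀ x, y x = x + a ((δ/2) • (x + y x)) :=
    fun x => ((contr x).fixedPoint_isFixedPt).symm
  have heq : ∀ x, x - y x + a ((δ/2) • (x + y x)) = 0 := by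
    intro x
    rw [sub_add_eq_add_sub, sub_eq_zero]
    exact (hfix x).symm
  refine ⟨y, ⟨?_, ?_⟩, heq⟩
  · -- injective
    intro x₁ x₂ h
    have e1 : y x₁ - x₁ = a ((δ/2) • (x₁ + y x₁)) := by
      nth_rewrite 1 [hfix x₁]; abel
    have e2 : y x₂ - x₂ = a ((δ/2) • (x₂ + y x₂)) := by
      nth_rewrite 1 [hfix x₂]; abel
    have hd' : a ((δ/2) • (x₂ + y x₂)) - a ((δ/2) • (x₁ + y x₁)) = x₁ - x₂ := by
      rw [← e1, ← e2, h]; abel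
    have hA : (δ/2) • (x₂ + y x₂) - (δ/2) • (x₁ + y x₁) = (δ/2) • (x₂ - x₁) := by
      rw [← smul_sub, h]; congr 1; abel
    have hn : ‖x₁ - x₂‖ ≤ δ * L / 2 * ‖x₁ - x₂‖ := by
      calc ‖x₁ - x₂‖ = ‖a ((δ/2) • (x₂ + y x₂)) - a ((δ/2) • (x₁ + y x₁))‖ := by rw [hd']
        _ ≤ L * ‖(δ/2) • (x₂ + y x₂) - (δ/2) • (x₁ + y x₁)‖ := ha _ _
        _ = L * (δ/2) * ‖x₂ - x₁‖ := by
            rw [hA, norm_smul, Real.norm_eq_abs, abs_of_pos hδ2]; ring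
        _ = δ * L / 2 * ‖x₁ - x₂‖ := by rw [norm_sub_rev]; ring
    by_contra hne
    have hpos : 0 < ‖x₁ - x₂‖ := by
      rw [norm_pos_iff, sub_ne_zero]; exact hne
    nlinarith
  · -- surjective
    intro z
    have contr2 : ContractingWith K
        (fun w : EuclideanSpace ℝ (Fin d) => z - a ((δ/2) • (w + z))) := by
      refine ⟨hKlt, LipschitzWith.of_dist_le_mul fun u v => ?_⟩
      rw [hK1]
      have e : (δ/2) • (u + z) - (δ/2) • (v + z) = (δ/2) • (u - v) := by
        rw [← smul_sub]; congr 1; abel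
      calc dist (z - a ((δ/2) • (u + z))) (z - a ((δ/2) • (v + z)))
          = ‖a ((δ/2) • (u + z)) - a ((δ/2) • (v + z))‖ := by
            rw [dist_sub_left, dist_eq_norm]
        _ ≤ L * ‖(δ/2) • (u + z) - (δ/2) • (v + z)‖ := ha _ _
        _ = L * (δ/2) * ‖u - v‖ := by
            rw [e, norm_smul, Real.norm_eq_abs, abs_of_pos hδ2]; ring
        _ = δ * L / 2 * dist u v := by rw [dist_eq_norm]; ring
    set x := contr2.fixedPoint _ with hx
    have hxfix : x = z - a ((δ/2) • (x + z)) := (contr2.fixedPoint_isFixedPt).symm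
    refine ⟨x, ?_⟩
    have hz : Function.IsFixedPt (fun w => x + a ((δ/2) • (x + w))) z := by
      show x + a ((δ/2) • (x + z)) = z
      nth_rewrite 1 [hxfix]; abel
    exact ((contr x).fixedPoint_unique hz).symm
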